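/- The trace, cost, and termination semantics of Imp and Imp² coincide: for every Imp program term p and every store s, trc_Imp(p)(s) = trc^r_{Imp²}(p)(s), cst_Imp(p)(s) = cst^r_{Imp²}(p)(s), and ter_Imp(p)(s) = ter^r_{Imp²}(p)(s). -/

import Mathlib

/-! # Statement 11: the trace, cost, and termination semantics of Imp and Imp² coincide -/
namespace ImpLang

/-- Arithmetic expressions over the variable set `ℕ`. -/
inductive Ex : Type
  | const : ℤ → Ex
  | var : ℕ → Ex
  | add : Ex → Ex → Ex
  | sub : Ex → Ex → Ex
  | mul : Ex → Ex → Ex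

/-- Variable stores. -/
abbrev Store := ℕ → ℤ

/-- Expression evaluation. -/
def eev : Ex → Store → ℤ
  | .const n, _ => n
  | .var x, s => s x
  | .add e₁ e₂, s => eev e₁ s + eev e₂ s
  | .sub e₁ e₂, s => eev e₁ s - eev e₂ s
  | .mul e₁ e₂, s => eev e₁ s * eev e₂ s

/-- Store update `s[x := n]`. -/
def upd (s : Store) (x : ℕ) (n : ℤ) : Store := fun y => if y = x then n else s y

/-- Imp program terms. -/
inductive P : Type
  | skip : P
  | assign : ℕ → Ex → P
  | whileE : Ex → P → P
  | seq : P → P → P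

/-- The deterministic small-step operational semantics of Imp:
`step p s = .inl (p', s')` means `p,s → p',s'`, and `step p s = .inr s'` means
`p,s ↓ s'`. -/
def step : P → Store → (P × Store) ⊕ Store
  | .skip, s => .inr s
  | .assign x e, s => .inr (upd s x (eev e s))
  | .whileE e p, s =>
      if eev e s = 0 then .inr s else .inl (.seq p (.whileE e p), s)
  | .seq p q, s =>
      match step p s with
      | .inl (p', s') => .inl (.seq p' q, s')
      | .inr s' => .inl (q, s')

/-- Iterated execution of the small-step semantics: `runF c n` is the configuration
reached after `n` steps from `c` (a running configuration `.inl (p,s)` or a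
terminated one `.inr s'`), and `none` if the execution stopped strictly before. -/
def runF : (P × Store) ⊕ Store → ℕ → Option ((P × Store) ⊕ Store)
  | c, 0 => some c
  | c, n+1 =>
      match runF c n with
      | some (.inl (p, s)) => some (step p s)
      | _ => none

/-- The trace map of Imp, encoding the (nonempty, finite or infinite) sequence
`trc(p)(s) ∈ 𝒮^∞` as a function `ℕ → Option (Store ⊕ Store)`: the `n`-th entry is
`some (.inl sₙ)` for an intermediate store produced by a transition `→`,
`some (.inr s')` for the final store produced by `↓`, and `none` beyond the end of a
finite trace. Thus a finite trace `(s₁,…,sₙ,s')` is the function sending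
`0,…,n-1` to `some (.inl sᵢ₊₁)`, `n` to `some (.inr s')` and everything else to
`none`, and an infinite trace `(s₁,s₂,…)` is the function sending each `n` to
`some (.inl sₙ₊₁)`. -/
def trc (p : P) (s : Store) : ℕ → Option (Store ⊕ Store) := fun n =>
  match runF (.inl (p, s)) (n+1) with
  | some (.inl (_, s')) => some (.inl s')
  | some (.inr s') => some (.inr s')
  | none => none

open Classical in
/-- The cost map of Imp: `cst p s = some (n, s')` iff `trc p s = (s₁,…,sₙ,s')` is
finite, and `cst p s = none` (the element `*`) iff `trc p s` is infinite. -/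
noncomputable def cst (p : P) (s : Store) : Option (ℕ × Store) :=
  if h : ∃ ns : ℕ × Store, trc p s ns.1 = some (.inr ns.2) then some h.choose
  else none

/-- The termination map of Imp: `ter p s = some s'` iff `trc p s` is finite with
last element `s'`, and `ter p s = none` (the element `*`) iff `trc p s` is
infinite. -/
noncomputable def ter (p : P) (s : Store) : Option Store := (cst p s).map Prod.snd

end ImpLang
namespace RW

/-- A deterministic reader–writer transition system over a state set `S`:
`rstep p s = c` means `p,s → c`; `wstep c = .inl (d,s)` means `c →ˢ d`;
`wstep c = .inr (.inl d)` means `c → d`; `wstep c = .inr (.inr s)` means `c ↓ s`. -/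
structure DRW (S : Type) where
  Rd : Type
  Wr : Type
  rstep : Rd → S → Wr
  wstep : Wr → (Wr × S) ⊕ (Wr ⊕ S)

variable {S : Type}

/-- The output transition `c →ˢ d`. -/
def OutTr (M : DRW S) (c : M.Wr) (s : S) (d : M.Wr) : Prop := M.wstep c = .inl (d, s)

/-- The silent transition `c → d`. -/
def TauTr (M : DRW S) (c d : M.Wr) : Prop := M.wstep c = .inr (.inl d)

/-- The termination transition `c ↓ s`. -/
def DownTr (M : DRW S) (c : M.Wr) (s : S) : Prop := M.wstep c = .inr (.inr s)

/-- The weak silent transition `c ⇒ d`: a finite chain of silent steps. -/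
def WSil (M : DRW S) : M.Wr → M.Wr → Prop := Relation.ReflTransGen (TauTr M)

/-- The weak output transition `c ⇒ˢ d`: `c ⇒ c' →ˢ d` for some `c'`. -/
def WOut (M : DRW S) (c : M.Wr) (s : S) (d : M.Wr) : Prop :=
  ∃ c', WSil M c c' ∧ OutTr M c' s d

/-- The weak termination transition `c ⇓ s`: `c ⇒ c' ↓ s` for some `c'`. -/
def WDone (M : DRW S) (c : M.Wr) (s : S) : Prop :=
  ∃ c', WSil M c c' ∧ DownTr M c' s

/-- `ReachL M c l d`: from `c` there is a chain of weak output transitions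
producing the list `l` of states and ending in `d`. -/
def ReachL (M : DRW S) : M.Wr → List S → M.Wr → Prop
  | c, [], d => c = d
  | c, s :: l, d => ∃ c', WOut M c s c' ∧ ReachL M c' l d

/-- `TrcEntry M c n v` holds iff the `n`-th entry (0-indexed) of the trace
`trc^w(c)` is `v`, where `v = .inl s` tags an intermediate output state and
`v = .inr s` tags the final state of a finite trace. -/
def TrcEntry (M : DRW S) (c : M.Wr) (n : ℕ) (v : S ⊕ S) : Prop :=
  (∃ l d s d', ReachL M c l d ∧ l.length = n ∧ WOut M d s d' ∧ v = .inl s) ∨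
  (∃ l d s, ReachL M c l d ∧ l.length = n ∧ WDone M d s ∧ v = .inr s)

open Classical in
/-- The writer trace map `trc^w : X_w → 𝒮^∞`, with a (nonempty, finite or infinite)
trace encoded as a function `ℕ → Option (S ⊕ S)`: a finite trace `(s₁,…,sₙ,s)`
sends `0,…,n-1` to `some (.inl sᵢ₊₁)`, `n` to `some (.inr s)` and all larger
numbers to `none`; an infinite trace `(s₁,s₂,…)` sends each `n` to
`some (.inl sₙ₊₁)`. -/
noncomputable def trcW (M : DRW S) (c : M.Wr) : ℕ → Option (S ⊕ S) := fun n =>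
  if h : ∃ v, TrcEntry M c n v then some h.choose else none

/-- The reader trace map `trc^r : X_r → (𝒮^∞)^𝒮`: `trc^r(p)(s) = trc^w(c)` where
`p,s → c`. -/
noncomputable def trcR (M : DRW S) (p : M.Rd) (s : S) : ℕ → Option (S ⊕ S) :=
  trcW M (M.rstep p s)

open Classical in
/-- The writer cost map: `cstW M c = some (n,s)` iff `trc^w(c) = (s₁,…,sₙ,s)` is
finite, and `none` (i.e. `*`) iff `trc^w(c)` is infinite. -/
noncomputable def cstW (M : DRW S) (c : M.Wr) : Option (ℕ × S) :=
  if h : ∃ ns : ℕ × S, trcW M c ns.1 = some (.inr ns.2) then some h.choose else none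

/-- The reader cost map. -/
noncomputable def cstR (M : DRW S) (p : M.Rd) (s : S) : Option (ℕ × S) :=
  cstW M (M.rstep p s)

/-- The writer termination map: the last element of a finite trace, `none` (`*`)
for an infinite trace. -/
noncomputable def terW (M : DRW S) (c : M.Wr) : Option S := (cstW M c).map Prod.snd

/-- The reader termination map. -/
noncomputable def terR (M : DRW S) (p : M.Rd) (s : S) : Option S :=
  (cstR M p s).map Prod.snd

end RW
namespace ImpLang

/-- Writers of the two-sorted language Imp². Readers are exactly the Imp terms `P`. -/
inductive W : Type
  /-- The writer `[p]_s`. -/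
  | run : P → Store → W
  /-- The writer `s.c`. -/
  | out : Store → W → W
  /-- The writer `ret_s`. -/
  | ret : Store → W
  /-- The writer `c ; q`. -/
  | seqW : W → P → W

/-- The reader semantics of Imp²: `rstep2 p s` is the unique writer `c` with
`p,s → c`. -/
def rstep2 : P → Store → W
  | .seq p q, s => .seqW (.run p s) q
  | .skip, s => .ret s
  | .assign x e, s => .ret (upd s x (eev e s))
  | .whileE e p, s =>
      if eev e s = 0 then .ret s
      else .out s (.run (.seq p (.whileE e p)) s)

/-- The writer semantics of Imp²: `wstep2 c = .inl (d,s)` means `c →ˢ d`,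
`wstep2 c = .inr (.inl d)` means `c → d`, and `wstep2 c = .inr (.inr s)` means
`c ↓ s`. -/
def wstep2 : W → (W × Store) ⊕ (W ⊕ Store)
  | .run p s => .inr (.inl (rstep2 p s))
  | .ret s => .inr (.inr s)
  | .out s c => .inl (c, s)
  | .seqW c q =>
      match wstep2 c with
      | .inl (d, s) => .inl (.seqW d q, s)
      | .inr (.inl d) => .inr (.inl (.seqW d q))
      | .inr (.inr s') => .inl (.run q s', s')

/-- The operational model of Imp² as a deterministic reader–writer transition
system. -/
def Imp2 : RW.DRW Store where
  Rd := P
  Wr := W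
  rstep := rstep2
  wstep := wstep2

end ImpLang


namespace RW

variable {S : Type} {M : DRW S}

theorem tau_det {c d d' : M.Wr} (h : TauTr M c d) (h' : TauTr M c d') : d = d' := by
  unfold TauTr at h h'
  rw [h] at h'
  simpa using h'

/-- `c` has no silent step. -/
def SilStuck (M : DRW S) (c : M.Wr) : Prop := ∀ d, ¬ TauTr M c d

theorem out_silStuck {c d : M.Wr} {s : S} (h : OutTr M c s d) : SilStuck M c := by
  intro e he
  unfold OutTr at h; unfold TauTr at he
  rw [h] at he; simp at he

theorem down_silStuck {c : M.Wr} {s : S} (h : DownTr M c s) : SilStuck M c := by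
  intro e he
  unfold DownTr at h; unfold TauTr at he
  rw [h] at he; simp at he

theorem wsil_last {c c₁ c₂ : M.Wr} (h2 : WSil M c c₂) (h1 : WSil M c c₁)
    (hs : SilStuck M c₁) : WSil M c₂ c₁ := by
  induction h2 with
  | refl => exact h1
  | tail _ hb ih =>
      rcases Relation.ReflTransGen.cases_head ih with rfl | ⟨b', hb', h'⟩
      · exact absurd hb (hs _)
      · rwa [tau_det hb hb'] 

theorem wout_unique {c d d' : M.Wr} {s s' : S}
    (h : WOut M c s d) (h' : WOut M c s' d') : s = s' ∧ d = d' := by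
  obtain ⟨e, he, ho⟩ := h
  obtain ⟨e', he', ho'⟩ := h'
  have h1 : WSil M e' e := wsil_last he' he (out_silStuck ho)
  rcases Relation.ReflTransGen.cases_head h1 with rfl | ⟨b, hb, _⟩
  · unfold OutTr at ho ho'
    rw [ho] at ho'
    simp_all
  · exact absurd hb (out_silStuck ho' _)

theorem wout_wdone {c d : M.Wr} {s s' : S}
    (h : WOut M c s d) (h' : WDone M c s') : False := by
  obtain ⟨e, he, ho⟩ := h
  obtain ⟨e', he', ho'⟩ := h'
  have h1 : WSil M e' e := wsil_last he' he (out_silStuck ho)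
  rcases Relation.ReflTransGen.cases_head h1 with rfl | ⟨b, hb, _⟩
  · unfold OutTr at ho; unfold DownTr at ho'
    rw [ho] at ho'; simp at ho'
  · exact absurd hb (down_silStuck ho' _)

theorem wdone_unique {c : M.Wr} {s s' : S}
    (h : WDone M c s) (h' : WDone M c s') : s = s' := by
  obtain ⟨e, he, ho⟩ := h
  obtain ⟨e', he', ho'⟩ := h'
  have h1 : WSil M e' e := wsil_last he' he (down_silStuck ho)
  rcases Relation.ReflTransGen.cases_head h1 with rfl | ⟨b, hb, _⟩
  · unfold DownTr at ho ho'
    rw [ho] at ho'; simpa using ho'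
  · exact absurd hb (down_silStuck ho' _)

theorem wout_tau {c c' d : M.Wr} {s : S} (h : TauTr M c c') :
    WOut M c s d ↔ WOut M c' s d := by
  constructor
  · rintro ⟨e, he, ho⟩
    rcases Relation.ReflTransGen.cases_head he with rfl | ⟨b, hb, he'⟩
    · exact absurd h (out_silStuck ho _)
    · exact ⟨e, (tau_det h hb) ▸ he', ho⟩
  · rintro ⟨e, he, ho⟩
    exact ⟨e, Relation.ReflTransGen.head h he, ho⟩

theorem wdone_tau {c c' : M.Wr} {s : S} (h : TauTr M c c') :
    WDone M c s ↔ WDone M c' s := by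
  constructor
  · rintro ⟨e, he, ho⟩
    rcases Relation.ReflTransGen.cases_head he with rfl | ⟨b, hb, he'⟩
    · exact absurd h (down_silStuck ho _)
    · exact ⟨e, (tau_det h hb) ▸ he', ho⟩
  · rintro ⟨e, he, ho⟩
    exact ⟨e, Relation.ReflTransGen.head h he, ho⟩

theorem reachL_nil {c d : M.Wr} : ReachL M c [] d ↔ c = d := Iff.rfl

theorem reachL_cons {c d : M.Wr} {s : S} {l : List S} :
    ReachL M c (s :: l) d ↔ ∃ c', WOut M c s c' ∧ ReachL M c' l d := Iff.rfl

theorem trcEntry_zero {c : M.Wr} {v : S ⊕ S} :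
    TrcEntry M c 0 v ↔
      (∃ s d', WOut M c s d' ∧ v = .inl s) ∨ (∃ s, WDone M c s ∧ v = .inr s) := by
  constructor
  · rintro (⟨l, d, s, d', hr, hl, ho, hv⟩ | ⟨l, d, s, hr, hl, ho, hv⟩)
    · rw [List.length_eq_zero_iff] at hl; subst hl
      rw [reachL_nil] at hr; subst hr
      exact Or.inl ⟨s, d', ho, hv⟩
    · rw [List.length_eq_zero_iff] at hl; subst hl
      rw [reachL_nil] at hr; subst hr
      exact Or.inr ⟨s, ho, hv⟩
  · rintro (⟨s, d', ho, hv⟩ | ⟨s, ho, hv⟩)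
    · exact Or.inl ⟨[], c, s, d', rfl, rfl, ho, hv⟩
    · exact Or.inr ⟨[], c, s, rfl, rfl, ho, hv⟩

theorem trcEntry_succ {c : M.Wr} {n : ℕ} {v : S ⊕ S} :
    TrcEntry M c (n + 1) v ↔ ∃ s c', WOut M c s c' ∧ TrcEntry M c' n v := by
  constructor
  · rintro (⟨l, d, s, d', hr, hl, ho, hv⟩ | ⟨l, d, s, hr, hl, ho, hv⟩)
    · cases l with
      | nil => simp at hl
      | cons s₀ l =>
          obtain ⟨c', ho', hr'⟩ := reachL_cons.mp hr
          exact ⟨s₀, c', ho', Or.inl ⟨l, d, s, d', hr', by simpa using hl, ho, hv⟩⟩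
    · cases l with
      | nil => simp at hl
      | cons s₀ l =>
          obtain ⟨c', ho', hr'⟩ := reachL_cons.mp hr
          exact ⟨s₀, c', ho', Or.inr ⟨l, d, s, hr', by simpa using hl, ho, hv⟩⟩
  · rintro ⟨s₀, c', ho', (⟨l, d, s, d', hr, hl, ho, hv⟩ | ⟨l, d, s, hr, hl, ho, hv⟩)⟩
    · exact Or.inl ⟨s₀ :: l, d, s, d', reachL_cons.mpr ⟨c', ho', hr⟩, by simpa using hl,
        ho, hv⟩
    · exact Or.inr ⟨s₀ :: l, d, s, reachL_cons.mpr ⟨c', ho', hr⟩, by simpa using hl,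
        ho, hv⟩

theorem trcEntry_tau {c c' : M.Wr} {n : ℕ} {v : S ⊕ S} (h : TauTr M c c') :
    TrcEntry M c n v ↔ TrcEntry M c' n v := by
  cases n with
  | zero =>
      rw [trcEntry_zero, trcEntry_zero]
      constructor
      · rintro (⟨s, d', ho, hv⟩ | ⟨s, ho, hv⟩)
        · exact Or.inl ⟨s, d', (wout_tau h).mp ho, hv⟩
        · exact Or.inr ⟨s, (wdone_tau h).mp ho, hv⟩
      · rintro (⟨s, d', ho, hv⟩ | ⟨s, ho, hv⟩)
        · exact Or.inl ⟨s, d', (wout_tau h).mpr ho, hv⟩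
        · exact Or.inr ⟨s, (wdone_tau h).mpr ho, hv⟩
  | succ n =>
      rw [trcEntry_succ, trcEntry_succ]
      constructor
      · rintro ⟨s, c₁, ho, hE⟩
        exact ⟨s, c₁, (wout_tau h).mp ho, hE⟩
      · rintro ⟨s, c₁, ho, hE⟩
        exact ⟨s, c₁, (wout_tau h).mpr ho, hE⟩

theorem trcEntry_wsil {c c' : M.Wr} {n : ℕ} {v : S ⊕ S} (h : WSil M c c') :
    TrcEntry M c n v ↔ TrcEntry M c' n v := by
  induction h with
  | refl => rfl
  | tail _ hb ih => exact ih.trans (trcEntry_tau hb)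

end RW

namespace ImpLang

open RW

theorem tau_run (p : P) (s : Store) : TauTr Imp2 (W.run p s) (rstep2 p s) := rfl

theorem tau_seq {c d : W} {q : P} (h : TauTr Imp2 c d) :
    TauTr Imp2 (W.seqW c q) (W.seqW d q) := by
  unfold TauTr at h ⊢
  show wstep2 (W.seqW c q) = _
  have hc : wstep2 c = .inr (.inl d) := h
  simp [wstep2, hc]
  rfl

theorem wsil_seq {c d : W} {q : P} (h : WSil Imp2 c d) :
    WSil Imp2 (W.seqW c q) (W.seqW d q) := by
  induction h with
  | refl => exact Relation.ReflTransGen.refl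
  | tail _ hb ih => exact ih.tail (tau_seq hb)

theorem out_seq {c d : W} {q : P} {s : Store} (h : OutTr Imp2 c s d) :
    OutTr Imp2 (W.seqW c q) s (W.seqW d q) := by
  unfold OutTr at h ⊢
  show wstep2 (W.seqW c q) = _
  have hc : wstep2 c = .inl (d, s) := h
  simp [wstep2, hc]
  rfl

theorem down_seq_out {c : W} {q : P} {s : Store} (h : DownTr Imp2 c s) :
    OutTr Imp2 (W.seqW c q) s (W.run q s) := by
  unfold DownTr at h; unfold OutTr
  show wstep2 (W.seqW c q) = _
  have hc : wstep2 c = .inr (.inr s) := h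
  simp [wstep2, hc]
  rfl

theorem wout_seq {c d : W} {q : P} {s : Store} (h : WOut Imp2 c s d) :
    WOut Imp2 (W.seqW c q) s (W.seqW d q) := by
  obtain ⟨e, he, ho⟩ := h
  exact ⟨W.seqW e q, wsil_seq he, out_seq ho⟩

theorem wdone_seq_wout {c : W} {q : P} {s : Store} (h : WDone Imp2 c s) :
    WOut Imp2 (W.seqW c q) s (W.run q s) := by
  obtain ⟨e, he, ho⟩ := h
  exact ⟨W.seqW e q, wsil_seq he, down_seq_out ho⟩

theorem lemA (p : P) (s : Store) :
    (∀ s', step p s = .inr s' → WDone Imp2 (W.run p s) s') ∧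
    (∀ p' s', step p s = .inl (p', s') →
      ∃ c, WOut Imp2 (W.run p s) s' c ∧ WSil Imp2 (W.run p' s') c) := by
  induction p generalizing s with
  | skip =>
      refine ⟨fun s' h => ?_, fun p' s' h => by simp [step] at h⟩
      obtain rfl : s = s' := by simpa [step] using h
      exact ⟨W.ret s, Relation.ReflTransGen.single (tau_run _ _), rfl⟩
  | assign x e =>
      refine ⟨fun s' h => ?_, fun p' s' h => by simp [step] at h⟩
      obtain rfl : upd s x (eev e s) = s' := by simpa [step] using h
      exact ⟨W.ret _, Relation.ReflTransGen.single (tau_run _ _), rfl⟩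
  | whileE e p ih =>
      by_cases he : eev e s = 0
      · refine ⟨fun s' h => ?_, fun p' s' h => by simp [step, he] at h⟩
        obtain rfl : s = s' := by simpa [step, he] using h
        refine ⟨W.ret s, Relation.ReflTransGen.single ?_, rfl⟩
        show TauTr Imp2 _ _
        unfold TauTr
        show wstep2 _ = _
        simp [wstep2, rstep2, he]
        rfl
      · refine ⟨fun s' h => by simp [step, he] at h, fun p' s' h => ?_⟩
        obtain ⟨rfl, rfl⟩ : P.seq p (P.whileE e p) = p' ∧ s = s' := by
          simpa [step, he] using h
        refine ⟨W.run (P.seq p (P.whileE e p)) s, ⟨W.out s (W.run (P.seq p (P.whileE e p)) s),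
          Relation.ReflTransGen.single ?_, rfl⟩, Relation.ReflTransGen.refl⟩
        show TauTr Imp2 _ _
        unfold TauTr
        show wstep2 _ = _
        simp [wstep2, rstep2, he]
        rfl
  | seq p q ihp ihq =>
      cases hstep : step p s with
      | inl p₀s₀ =>
          obtain ⟨p₀, s₀⟩ := p₀s₀
          refine ⟨fun s' h => by simp [step, hstep] at h, fun p' s' h => ?_⟩
          obtain ⟨rfl, rfl⟩ : P.seq p₀ q = p' ∧ s₀ = s' := by
            simpa [step, hstep] using h
          obtain ⟨c, ⟨e, he, ho⟩, hsil⟩ := (ihp s).2 p₀ s₀ hstep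
          refine ⟨W.seqW c q, ⟨W.seqW e q, ?_, out_seq ho⟩, ?_⟩
          · exact Relation.ReflTransGen.head (tau_run _ _) (wsil_seq he)
          · exact Relation.ReflTransGen.head (tau_run _ _) (wsil_seq hsil)
      | inr s₀ =>
          refine ⟨fun s' h => by simp [step, hstep] at h, fun p' s' h => ?_⟩
          obtain ⟨rfl, rfl⟩ : q = p' ∧ s₀ = s' := by
            simpa [step, hstep] using h
          obtain ⟨e, he, ho⟩ := (ihp s).1 s₀ hstep
          refine ⟨W.run q s₀, ⟨W.seqW e q, ?_, down_seq_out ho⟩, Relation.ReflTransGen.refl⟩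
          exact Relation.ReflTransGen.head (tau_run _ _) (wsil_seq he)

theorem runF_succ (c : (P × Store) ⊕ Store) (n : ℕ) :
    runF c (n + 1) = match runF c n with
      | some (.inl (p, s)) => some (step p s)
      | _ => none := rfl

theorem runF_shift (n : ℕ) (p : P) (s : Store) :
    runF (.inl (p, s)) (n + 1) = runF (step p s) n := by
  induction n with
  | zero => rfl
  | succ n ih => rw [runF_succ, ih, runF_succ]

theorem runF_inr (n : ℕ) (s : Store) : runF (.inr s) (n + 1) = none := by
  induction n with
  | zero => rfl
  | succ n ih => rw [runF_succ, ih]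

theorem entry_run (n : ℕ) (p : P) (s : Store) (v : Store ⊕ Store) :
    TrcEntry Imp2 (W.run p s) n v ↔ trc p s n = some v := by
  induction n generalizing p s with
  | zero =>
      have h1 : runF (.inl (p, s)) 1 = some (step p s) := rfl
      cases hstep : step p s with
      | inl p₀s₀ =>
          obtain ⟨p₀, s₀⟩ := p₀s₀
          have htr : trc p s 0 = some (.inl s₀) := by
            simp only [trc]; rw [h1, hstep]
          rw [htr, trcEntry_zero (M := Imp2) (c := (W.run p s : Imp2.Wr))]
          obtain ⟨c, hc, _⟩ := (lemA p s).2 p₀ s₀ hstep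
          constructor
          · rintro (⟨s₁, d', ho, rfl⟩ | ⟨s₁, ho, rfl⟩)
            · obtain ⟨rfl, rfl⟩ := wout_unique ho hc
              rfl
            · exact absurd (wout_wdone hc ho) id
          · intro hv
            obtain rfl : v = .inl s₀ := by simpa using hv.symm
            exact Or.inl ⟨s₀, c, hc, rfl⟩
      | inr s₀ =>
          have htr : trc p s 0 = some (.inr s₀) := by
            simp only [trc]; rw [h1, hstep]
          rw [htr, trcEntry_zero (M := Imp2) (c := (W.run p s : Imp2.Wr))]
          have hc := (lemA p s).1 s₀ hstep
          constructor
          · rintro (⟨s₁, d', ho, rfl⟩ | ⟨s₁, ho, rfl⟩)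
            · exact absurd (wout_wdone ho hc) id
            · rw [wdone_unique ho hc]
          · intro hv
            obtain rfl : v = .inr s₀ := by simpa using hv.symm
            exact Or.inr ⟨s₀, hc, rfl⟩
  | succ n ih =>
      rw [trcEntry_succ (M := Imp2) (c := (W.run p s : Imp2.Wr))]
      cases hstep : step p s with
      | inl p₀s₀ =>
          obtain ⟨p₀, s₀⟩ := p₀s₀
          have htr : trc p s (n + 1) = trc p₀ s₀ n := by
            simp only [trc]
            rw [runF_shift, hstep, runF_shift]
          rw [htr, ← ih p₀ s₀]
          obtain ⟨c, hc, hsil⟩ := (lemA p s).2 p₀ s₀ hstep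
          constructor
          · rintro ⟨s₁, c₁, ho, hE⟩
            obtain ⟨rfl, rfl⟩ := wout_unique ho hc
            exact (trcEntry_wsil hsil).mpr hE
          · intro hE
            exact ⟨s₀, c, hc, (trcEntry_wsil hsil).mp hE⟩
      | inr s₀ =>
          have htr : trc p s (n + 1) = none := by
            simp only [trc]
            rw [runF_shift, hstep, runF_inr]
          rw [htr]
          have hc := (lemA p s).1 s₀ hstep
          constructor
          · rintro ⟨s₁, c₁, ho, _⟩
            exact absurd (wout_wdone ho hc) id
          · intro h; simp at h

theorem entry_rstep (n : ℕ) (p : P) (s : Store) (v : Store ⊕ Store) :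
    TrcEntry Imp2 (rstep2 p s) n v ↔ trc p s n = some v :=
  (trcEntry_tau (tau_run p s)).symm.trans (entry_run n p s v)

theorem trc_eq (p : P) (s : Store) : trc p s = trcR Imp2 p s := by
  funext n
  show trc p s n = trcW Imp2 (rstep2 p s) n
  unfold trcW
  by_cases h : ∃ v, TrcEntry Imp2 (rstep2 p s) n v
  · rw [dif_pos h]
    exact (entry_rstep n p s h.choose).mp h.choose_spec
  · rw [dif_neg h]
    cases htr : trc p s n with
    | none => rfl
    | some v => exact absurd ⟨v, (entry_rstep n p s v).mpr htr⟩ h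

end ImpLang

namespace ImpLang

open RW

/-- for every Imp program `p` and store `s`, the trace, cost and
termination semantics of `p` as an Imp program and as an Imp² reader coincide. -/
theorem imp_imp2_semantics_coincide (p : P) (s : Store) :
    trc p s = trcR Imp2 p s ∧ cst p s = cstR Imp2 p s ∧ ter p s = terR Imp2 p s := by
  have h : trc p s = trcW Imp2 (Imp2.rstep p s) := trc_eq p s
  have hcst : cst p s = cstR Imp2 p s := by
    unfold cst cstR cstW
    rw [h]
  exact ⟨trc_eq p s, hcst, by unfold ter terR; rw [hcst]⟩

end ImpLang
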